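/- The probability generating function of V(2) equals s²p²/(1 − qs − qps²); precisely, in the ring of formal power series ℝ⟦X⟧, (1 − q·X − q·p·X²)·∑_{v≥0} P(V(2) = v)·X^v = p²·X². -/

import Mathlib

open MeasureTheory Finset PowerSeries

/-- Waiting time for the first success run of length `k`: the smallest `n ≥ k` such that
trials `n - k + 1, …, n` are all successes (trials are indexed from `1`). -/
noncomputable def waitingTime (k : ℕ) (ω : ℕ → Bool) : ℕ :=
  sInf {n | k ≤ n ∧ ∀ i ∈ Finset.Icc (n - k + 1) n, ω i = true}

namespace Stmt5Aux

/-- success run of length 2 ending at trial `n` -/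
def hits (ω : ℕ → Bool) (n : ℕ) : Prop := 2 ≤ n ∧ ω (n-1) = true ∧ ω n = true

instance : ∀ ω n, Decidable (hits ω n) := fun ω n => by unfold hits; infer_instance

lemma waitingTime_two (ω : ℕ → Bool) : waitingTime 2 ω = sInf {n | hits ω n} := by
  unfold waitingTime hits
  congr 1
  ext n
  simp only [Set.mem_setOf_eq, and_congr_right_iff]
  intro hn
  constructor
  · intro h
    exact ⟨h (n-1) (by simp; omega), h n (by simp; omega)⟩
  · rintro ⟨h1, h2⟩ i hi
    simp only [Finset.mem_Icc] at hi
    rcases (by omega : i = n - 1 ∨ i = n) with rfl | rfl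
    · exact h1
    · exact h2

lemma waitingTime_two_eq_iff {ω : ℕ → Bool} {v : ℕ} (hv : 2 ≤ v) :
    waitingTime 2 ω = v ↔ hits ω v ∧ ∀ m < v, ¬ hits ω m := by
  rw [waitingTime_two]
  constructor
  · intro h
    have hne : {n | hits ω n}.Nonempty := by
      by_contra hne
      rw [Set.not_nonempty_iff_eq_empty] at hne
      rw [hne] at h
      simp [Nat.sInf_empty] at h
      omega
    refine ⟨h ▸ Nat.sInf_mem hne, fun m hm => Nat.notMem_of_lt_sInf (h ▸ hm)⟩
  · rintro ⟨h1, h2⟩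
    exact le_antisymm (Nat.sInf_le h1) (le_of_not_gt fun h =>
      h2 _ h (Nat.sInf_mem (⟨v, h1⟩ : {n | hits ω n}.Nonempty)))

/-- extension of a finite string (0-indexed) to ℕ → Bool (1-indexed trials) -/
def ext (v : ℕ) (c : Fin v → Bool) : ℕ → Bool :=
  fun i => if h : 1 ≤ i ∧ i ≤ v then c ⟨i-1, by omega⟩ else false

lemma ext_agree {v : ℕ} {ω : ℕ → Bool} :
    ∀ i, 1 ≤ i → i ≤ v → ω i = ext v (fun j => ω (j.val+1)) i := by
  intro i h1 h2
  unfold ext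
  rw [dif_pos (show 1 ≤ i ∧ i ≤ v from ⟨h1, h2⟩)]
  show ω i = ω (i - 1 + 1)
  congr 1
  omega

lemma hits_congr {v : ℕ} {ω ω' : ℕ → Bool} (h : ∀ i, 1 ≤ i → i ≤ v → ω i = ω' i)
    {m : ℕ} (hm : m ≤ v) : hits ω m ↔ hits ω' m := by
  unfold hits
  by_cases h2 : 2 ≤ m
  · rw [h (m-1) (by omega) (by omega), h m (by omega) (by omega)]
  · simp [h2]


lemma ext_apply {v : ℕ} (c : Fin v → Bool) (j : Fin v) : ext v c (j.val + 1) = c j := by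
  unfold ext
  rw [dif_pos (show 1 ≤ j.val + 1 ∧ j.val + 1 ≤ v from ⟨by omega, by omega⟩)]
  exact congrArg c (by ext; simp)

/-- weight of a finite string -/
def wt (p : ℝ) {v : ℕ} (c : Fin v → Bool) : ℝ := ∏ j, (if c j = true then p else 1 - p)

lemma wt_nonneg {p : ℝ} (hp0 : 0 ≤ p) (hp1 : p ≤ 1) {v : ℕ} (c : Fin v → Bool) :
    0 ≤ wt p c :=
  Finset.prod_nonneg fun j _ => by split <;> [exact hp0; linarith]

lemma prod_Icc_wt (p : ℝ) {n : ℕ} (c : Fin n → Bool) :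
    (∏ i ∈ Finset.Icc 1 n, if ext n c i = true then p else 1 - p) = wt p c := by
  rw [← Finset.Ico_add_one_right_eq_Icc, Finset.prod_Ico_eq_prod_range]
  simp only [Nat.add_sub_cancel, Nat.succ_sub_one]
  rw [wt, ← Fin.prod_univ_eq_prod_range (fun i => if ext n c (1 + i) = true then p else 1 - p) n]
  refine Finset.prod_congr rfl fun j _ => ?_
  rw [show 1 + j.val = j.val + 1 from by omega, ext_apply]

lemma cyl_measurable (b : ℕ → Bool) (n : ℕ) :
    MeasurableSet {ω : ℕ → Bool | ∀ i, 1 ≤ i → i ≤ n → ω i = b i} := by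
  have : {ω : ℕ → Bool | ∀ i, 1 ≤ i → i ≤ n → ω i = b i}
      = ⋂ i ∈ Set.Icc 1 n, (fun ω : ℕ → Bool => ω i) ⁻¹' {b i} := by
    ext ω
    simp [Set.mem_Icc]
  rw [this]
  exact MeasurableSet.biInter (Set.to_countable _) fun i _ =>
    measurable_pi_apply i (measurableSet_singleton (b i))

lemma meas_eq {p : ℝ} (hp0 : 0 < p) (hp1 : p < 1) (μ : Measure (ℕ → Bool))
    (hμ : ∀ (n : ℕ) (b : ℕ → Bool),
      μ {ω | ∀ i, 1 ≤ i → i ≤ n → ω i = b i}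
        = ENNReal.ofReal (∏ i ∈ Finset.Icc 1 n, if b i = true then p else 1 - p))
    (n : ℕ) (Q : (ℕ → Bool) → Prop) [DecidablePred Q]
    (hQ : ∀ ω ω' : ℕ → Bool, (∀ i, 1 ≤ i → i ≤ n → ω i = ω' i) → Q ω → Q ω') :
    μ {ω | Q ω}
      = ENNReal.ofReal (∑ c : Fin n → Bool, if Q (ext n c) then wt p c else 0) := by
  classical
  have hset : {ω | Q ω}
      = ⋃ c ∈ Finset.univ.filter (fun c : Fin n → Bool => Q (ext n c)),
          {ω : ℕ → Bool | ∀ i, 1 ≤ i → i ≤ n → ω i = ext n c i} := by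
    ext ω
    simp only [Set.mem_setOf_eq, Set.mem_iUnion, Finset.mem_filter, Finset.mem_univ, true_and,
      exists_prop]
    constructor
    · intro hQω
      exact ⟨fun j => ω (j.val + 1), hQ ω _ (fun i h1 h2 => ext_agree i h1 h2) hQω,
        fun i h1 h2 => ext_agree i h1 h2⟩
    · rintro ⟨c, hc, hcyl⟩
      exact hQ _ ω (fun i h1 h2 => (hcyl i h1 h2).symm) hc
  rw [hset, measure_biUnion_finset ?disj (fun c _ => cyl_measurable _ n)]
  case disj =>
    intro c hc c' hc' hne
    simp only [Function.onFun]
    rw [Set.disjoint_left]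
    intro ω hω hω'
    apply hne
    funext j
    have h1 := hω (j.val + 1) (by omega) (by omega)
    have h2 := hω' (j.val + 1) (by omega) (by omega)
    rw [ext_apply] at h1 h2
    rw [← h1, ← h2]
  rw [Finset.sum_congr rfl (fun c hc => by
    rw [hμ n (ext n c), prod_Icc_wt])]
  rw [← ENNReal.ofReal_sum_of_nonneg (fun c _ => wt_nonneg hp0.le hp1.le c)]
  congr 1
  rw [Finset.sum_filter]


lemma ext_eq_true_imp {v : ℕ} {c : Fin v → Bool} {i : ℕ} (h : ext v c i = true) :
    1 ≤ i ∧ i ≤ v := by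
  by_contra hc
  rw [ext, dif_neg hc] at h
  exact Bool.false_ne_true h

lemma ext_cons_one {n : ℕ} (a : Bool) (c : Fin n → Bool) :
    ext (n+1) (Fin.cons a c) 1 = a := by
  have := ext_apply (Fin.cons a c) (0 : Fin (n+1))
  simpa using this

lemma ext_cons_succ {n : ℕ} (a : Bool) (c : Fin n → Bool) (i : ℕ) (hi : 2 ≤ i) :
    ext (n+1) (Fin.cons a c) i = ext n c (i-1) := by
  by_cases h : i ≤ n + 1
  · rw [ext, ext, dif_pos (show 1 ≤ i ∧ i ≤ n + 1 from ⟨by omega, h⟩),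
      dif_pos (show 1 ≤ i - 1 ∧ i - 1 ≤ n from ⟨by omega, by omega⟩)]
    have : (⟨i - 1, by omega⟩ : Fin (n+1)) = Fin.succ ⟨i - 1 - 1, by omega⟩ := by
      ext; simp; omega
    rw [this, Fin.cons_succ]
  · rw [ext, ext, dif_neg (by omega), dif_neg (by omega)]

lemma hits_ext_cons {n : ℕ} (a : Bool) (c : Fin n → Bool) {m : ℕ} (hm : 3 ≤ m) :
    hits (ext (n+1) (Fin.cons a c)) m ↔ hits (ext n c) (m-1) := by
  unfold hits
  rw [ext_cons_succ a c m (by omega), ext_cons_succ a c (m-1) (by omega)]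
  constructor <;> rintro ⟨-, hb, hc⟩ <;> exact ⟨by omega, hb, hc⟩

lemma hits_ext_cons_two {n : ℕ} (a : Bool) (c : Fin n → Bool) :
    hits (ext (n+1) (Fin.cons a c)) 2 ↔ a = true ∧ ext n c 1 = true := by
  unfold hits
  rw [show (2:ℕ) - 1 = 1 from rfl, ext_cons_one, ext_cons_succ a c 2 le_rfl]
  simp

/-- the first success run of length 2 ends exactly at trial `v` -/
def firstAt (v : ℕ) (ω : ℕ → Bool) : Prop := hits ω v ∧ ∀ m < v, ¬ hits ω m

instance : ∀ v ω, Decidable (firstAt v ω) := fun v ω => by unfold firstAt; infer_instance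

/-- no success run of length 2 ends at any trial `≤ n` -/
def noHit (n : ℕ) (ω : ℕ → Bool) : Prop := ∀ m ≤ n, ¬ hits ω m

instance : ∀ n ω, Decidable (noHit n ω) := fun n ω => by unfold noHit; infer_instance

lemma firstAt_cons {n : ℕ} (hn : 2 ≤ n) (a : Bool) (c : Fin n → Bool) :
    firstAt (n+1) (ext (n+1) (Fin.cons a c))
      ↔ ¬(a = true ∧ ext n c 1 = true) ∧ firstAt n (ext n c) := by
  unfold firstAt
  rw [hits_ext_cons a c (by omega : 3 ≤ n + 1)]
  simp only [Nat.add_sub_cancel]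
  constructor
  · rintro ⟨h1, h2⟩
    refine ⟨fun hac => h2 2 (by omega) ((hits_ext_cons_two a c).2 hac), h1, fun m hm hhit => ?_⟩
    have hm2 : 2 ≤ m := hhit.1
    exact h2 (m+1) (by omega) ((hits_ext_cons a c (by omega)).2 (by simpa using hhit))
  · rintro ⟨hac, h1, h2⟩
    refine ⟨h1, fun m hm hhit => ?_⟩
    have hm2 : 2 ≤ m := hhit.1
    rcases eq_or_lt_of_le hm2 with rfl | hm3
    · exact hac ((hits_ext_cons_two a c).1 hhit)
    · have := (hits_ext_cons a c (by omega : 3 ≤ m)).1 hhit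
      exact h2 (m-1) (by omega) this

lemma noHit_cons {n : ℕ} (a : Bool) (c : Fin n → Bool) :
    noHit (n+1) (ext (n+1) (Fin.cons a c))
      ↔ ¬(a = true ∧ ext n c 1 = true) ∧ noHit n (ext n c) := by
  unfold noHit
  constructor
  · intro h
    refine ⟨fun hac => ?_, fun m hm hhit => ?_⟩
    · have hn1 : 1 ≤ n := (ext_eq_true_imp hac.2).2
      exact h 2 (by omega) ((hits_ext_cons_two a c).2 hac)
    · have hm2 : 2 ≤ m := hhit.1
      exact h (m+1) (by omega) ((hits_ext_cons a c (by omega)).2 (by simpa using hhit))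
  · rintro ⟨hac, h⟩ m hm hhit
    have hm2 : 2 ≤ m := hhit.1
    rcases eq_or_lt_of_le hm2 with rfl | hm3
    · exact hac ((hits_ext_cons_two a c).1 hhit)
    · exact h (m-1) (by omega) ((hits_ext_cons a c (by omega : 3 ≤ m)).1 hhit)

lemma sum_cons {n : ℕ} (F : (Fin (n+1) → Bool) → ℝ) :
    ∑ c : Fin (n+1) → Bool, F c
      = (∑ d : Fin n → Bool, F (Fin.cons false d))
        + ∑ d : Fin n → Bool, F (Fin.cons true d) := by
  rw [← Equiv.sum_comp (Fin.consEquiv (fun _ => Bool)) F, Fintype.sum_prod_type,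
    Fintype.sum_bool]
  rw [add_comm]
  rfl

lemma wt_cons {p : ℝ} {n : ℕ} (a : Bool) (c : Fin n → Bool) :
    wt p (Fin.cons a c) = (if a = true then p else 1 - p) * wt p c := by
  rw [wt, wt, Fin.prod_univ_succ]
  simp

/-- combinatorial probability that the first success run of length 2 ends at trial `v` -/
noncomputable def g (p : ℝ) (v : ℕ) : ℝ :=
  ∑ c : Fin v → Bool, if firstAt v (ext v c) then wt p c else 0

noncomputable def U (p : ℝ) (n : ℕ) : ℝ :=
  ∑ c : Fin n → Bool, if ext n c 1 = false ∧ firstAt n (ext n c) then wt p c else 0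

/-- combinatorial probability of no success run of length 2 within the first `n` trials -/
noncomputable def W (p : ℝ) (n : ℕ) : ℝ :=
  ∑ c : Fin n → Bool, if noHit n (ext n c) then wt p c else 0

noncomputable def WU (p : ℝ) (n : ℕ) : ℝ :=
  ∑ c : Fin n → Bool, if ext n c 1 = false ∧ noHit n (ext n c) then wt p c else 0


variable {p : ℝ}

lemma g_nonneg (hp0 : 0 ≤ p) (hp1 : p ≤ 1) (v : ℕ) : 0 ≤ g p v :=
  Finset.sum_nonneg fun c _ => by
    split
    · exact wt_nonneg hp0 hp1 c
    · exact le_refl 0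

lemma W_nonneg (hp0 : 0 ≤ p) (hp1 : p ≤ 1) (n : ℕ) : 0 ≤ W p n :=
  Finset.sum_nonneg fun c _ => by
    split
    · exact wt_nonneg hp0 hp1 c
    · exact le_refl 0

lemma g_zero : g p 0 = 0 :=
  Finset.sum_eq_zero fun c _ => by
    rw [if_neg]
    rintro ⟨⟨h2, -⟩, -⟩
    omega

lemma g_one : g p 1 = 0 :=
  Finset.sum_eq_zero fun c _ => by
    rw [if_neg]
    rintro ⟨⟨h2, -⟩, -⟩
    omega

lemma firstAt_two_iff (c : Fin 2 → Bool) :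
    firstAt 2 (ext 2 c) ↔ c 0 = true ∧ c 1 = true := by
  unfold firstAt hits
  have e1 : ext 2 c 1 = c 0 := by simpa using ext_apply c 0
  have e2 : ext 2 c 2 = c 1 := by simpa using ext_apply c 1
  rw [show (2:ℕ) - 1 = 1 from rfl, e1, e2]
  constructor
  · rintro ⟨⟨-, hb, hc⟩, -⟩
    exact ⟨hb, hc⟩
  · rintro ⟨hb, hc⟩
    exact ⟨⟨le_rfl, hb, hc⟩, fun m hm hhit => by have := hhit.1; omega⟩

lemma g_two : g p 2 = p ^ 2 := by
  classical
  rw [g, Finset.sum_eq_single (fun _ => true)]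
  · rw [if_pos ((firstAt_two_iff _).2 ⟨rfl, rfl⟩), wt]
    simp [sq]
  · intro c _ hc
    rw [if_neg]
    intro hfa
    obtain ⟨h0, h1⟩ := (firstAt_two_iff c).1 hfa
    apply hc
    funext j
    fin_cases j
    · exact h0
    · exact h1
  · intro h
    exact absurd (Finset.mem_univ _) h

lemma U_eq (n : ℕ) : U p (n+2) = (1-p) * g p (n+1) := by
  cases n with
  | zero =>
    rw [U, Finset.sum_eq_zero, g_one, mul_zero]
    intro c _
    rw [if_neg]
    rintro ⟨hf, hfa⟩
    obtain ⟨h0, -⟩ := (firstAt_two_iff c).1 hfa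
    have e1 : ext 2 c 1 = c 0 := by simpa using ext_apply c 0
    rw [e1, h0] at hf
    simp at hf
  | succ m =>
    rw [U, sum_cons]
    have h1 : ∀ d : Fin (m+2) → Bool,
        (if ext (m+3) (Fin.cons true d) 1 = false
            ∧ firstAt (m+3) (ext (m+3) (Fin.cons true d)) then wt p (Fin.cons true d) else 0)
          = 0 := fun d => by
      rw [if_neg]
      rintro ⟨hf, -⟩
      rw [ext_cons_one] at hf
      simp at hf
    have h2 : ∀ d : Fin (m+2) → Bool,
        (if ext (m+3) (Fin.cons false d) 1 = false
            ∧ firstAt (m+3) (ext (m+3) (Fin.cons false d)) then wt p (Fin.cons false d) else 0)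
          = (1-p) * (if firstAt (m+2) (ext (m+2) d) then wt p d else 0) := fun d => by
      have hw : wt p (Fin.cons false d) = (1-p) * wt p d := by rw [wt_cons]; simp
      by_cases hd : firstAt (m+2) (ext (m+2) d)
      · rw [if_pos, if_pos hd, hw]
        exact ⟨by rw [ext_cons_one], (firstAt_cons (by omega) false d).2 ⟨by simp, hd⟩⟩
      · rw [if_neg, if_neg hd, mul_zero]
        rintro ⟨-, hfa⟩
        exact hd ((firstAt_cons (by omega) false d).1 hfa).2
    rw [Finset.sum_congr rfl (fun d _ => h2 d), Finset.sum_congr rfl (fun d _ => h1 d),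
      Finset.sum_const_zero, add_zero, ← Finset.mul_sum, g]

lemma g_rec (n : ℕ) :
    g p (n+3) = (1-p) * g p (n+2) + (1-p) * p * g p (n+1) := by
  rw [show g p (n+3) = ∑ c : Fin (n+3) → Bool,
      if firstAt (n+3) (ext (n+3) c) then wt p c else 0 from rfl, sum_cons]
  have h1 : ∀ d : Fin (n+2) → Bool,
      (if firstAt (n+3) (ext (n+3) (Fin.cons false d)) then wt p (Fin.cons false d) else 0)
        = (1-p) * (if firstAt (n+2) (ext (n+2) d) then wt p d else 0) := fun d => by
    have hw : wt p (Fin.cons false d) = (1-p) * wt p d := by rw [wt_cons]; simp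
    by_cases hd : firstAt (n+2) (ext (n+2) d)
    · rw [if_pos ((firstAt_cons (by omega) false d).2 ⟨by simp, hd⟩), if_pos hd, hw]
    · rw [if_neg, if_neg hd, mul_zero]
      intro hfa
      exact hd ((firstAt_cons (by omega) false d).1 hfa).2
  have h2 : ∀ d : Fin (n+2) → Bool,
      (if firstAt (n+3) (ext (n+3) (Fin.cons true d)) then wt p (Fin.cons true d) else 0)
        = p * (if ext (n+2) d 1 = false ∧ firstAt (n+2) (ext (n+2) d) then wt p d else 0) :=
      fun d => by
    have hw : wt p (Fin.cons true d) = p * wt p d := by rw [wt_cons]; simp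
    by_cases hd : ext (n+2) d 1 = false ∧ firstAt (n+2) (ext (n+2) d)
    · rw [if_pos, if_pos hd, hw]
      refine (firstAt_cons (by omega) true d).2 ⟨?_, hd.2⟩
      rw [hd.1]
      simp
    · rw [if_neg, if_neg hd, mul_zero]
      intro hfa
      obtain ⟨hac, hf⟩ := (firstAt_cons (by omega) true d).1 hfa
      refine hd ⟨?_, hf⟩
      by_contra hne
      exact hac ⟨rfl, by simpa using hne⟩
  rw [Finset.sum_congr rfl (fun d _ => h1 d), Finset.sum_congr rfl (fun d _ => h2 d),
    ← Finset.mul_sum, ← Finset.mul_sum, ← g, ← U, U_eq]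
  ring


lemma W_zero : W p 0 = 1 := by
  rw [W]
  rw [Fintype.sum_unique]
  rw [if_pos, wt]
  · simp
  · intro m hm hhit
    have := hhit.1
    omega

lemma noHit_cons_iff {n : ℕ} (a : Bool) (d : Fin n → Bool) :
    noHit (n+1) (ext (n+1) (Fin.cons a d))
      ↔ ¬(a = true ∧ ext n d 1 = true) ∧ noHit n (ext n d) := noHit_cons a d

lemma W_succ (n : ℕ) : W p (n+1) = (1-p) * W p n + p * WU p n := by
  rw [W, sum_cons]
  have h1 : ∀ d : Fin n → Bool,
      (if noHit (n+1) (ext (n+1) (Fin.cons false d)) then wt p (Fin.cons false d) else 0)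
        = (1-p) * (if noHit n (ext n d) then wt p d else 0) := fun d => by
    have hw : wt p (Fin.cons false d) = (1-p) * wt p d := by rw [wt_cons]; simp
    by_cases hd : noHit n (ext n d)
    · rw [if_pos ((noHit_cons_iff false d).2 ⟨by simp, hd⟩), if_pos hd, hw]
    · rw [if_neg, if_neg hd, mul_zero]
      intro hfa
      exact hd ((noHit_cons_iff false d).1 hfa).2
  have h2 : ∀ d : Fin n → Bool,
      (if noHit (n+1) (ext (n+1) (Fin.cons true d)) then wt p (Fin.cons true d) else 0)
        = p * (if ext n d 1 = false ∧ noHit n (ext n d) then wt p d else 0) := fun d => by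
    have hw : wt p (Fin.cons true d) = p * wt p d := by rw [wt_cons]; simp
    by_cases hd : ext n d 1 = false ∧ noHit n (ext n d)
    · rw [if_pos, if_pos hd, hw]
      refine (noHit_cons_iff true d).2 ⟨?_, hd.2⟩
      rw [hd.1]
      simp
    · rw [if_neg, if_neg hd, mul_zero]
      intro hfa
      obtain ⟨hac, hf⟩ := (noHit_cons_iff true d).1 hfa
      refine hd ⟨?_, hf⟩
      by_contra hne
      exact hac ⟨rfl, by simpa using hne⟩
  rw [Finset.sum_congr rfl (fun d _ => h1 d), Finset.sum_congr rfl (fun d _ => h2 d),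
    ← Finset.mul_sum, ← Finset.mul_sum, ← W, ← WU]

lemma WU_succ (n : ℕ) : WU p (n+1) = (1-p) * W p n := by
  rw [WU, sum_cons]
  have h1 : ∀ d : Fin n → Bool,
      (if ext (n+1) (Fin.cons true d) 1 = false
          ∧ noHit (n+1) (ext (n+1) (Fin.cons true d)) then wt p (Fin.cons true d) else 0)
        = 0 := fun d => by
    rw [if_neg]
    rintro ⟨hf, -⟩
    rw [ext_cons_one] at hf
    simp at hf
  have h2 : ∀ d : Fin n → Bool,
      (if ext (n+1) (Fin.cons false d) 1 = false
          ∧ noHit (n+1) (ext (n+1) (Fin.cons false d)) then wt p (Fin.cons false d) else 0)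
        = (1-p) * (if noHit n (ext n d) then wt p d else 0) := fun d => by
    have hw : wt p (Fin.cons false d) = (1-p) * wt p d := by rw [wt_cons]; simp
    by_cases hd : noHit n (ext n d)
    · rw [if_pos, if_pos hd, hw]
      exact ⟨by rw [ext_cons_one], (noHit_cons_iff false d).2 ⟨by simp, hd⟩⟩
    · rw [if_neg, if_neg hd, mul_zero]
      rintro ⟨-, hfa⟩
      exact hd ((noHit_cons_iff false d).1 hfa).2
  rw [Finset.sum_congr rfl (fun d _ => h2 d), Finset.sum_congr rfl (fun d _ => h1 d),
    Finset.sum_const_zero, add_zero, ← Finset.mul_sum, W]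

lemma WU_le_W (hp0 : 0 ≤ p) (hp1 : p ≤ 1) (n : ℕ) : WU p n ≤ W p n := by
  refine Finset.sum_le_sum fun c _ => ?_
  by_cases hd : ext n c 1 = false ∧ noHit n (ext n c)
  · rw [if_pos hd, if_pos hd.2]
  · rw [if_neg hd]
    split
    · exact wt_nonneg hp0 hp1 c
    · exact le_refl 0

lemma W_mono (hp0 : 0 ≤ p) (hp1 : p ≤ 1) (n : ℕ) : W p (n+1) ≤ W p n := by
  rw [W_succ]
  have := WU_le_W hp0 hp1 n
  nlinarith [W_nonneg hp0 hp1 n]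

lemma W_two_step (hp0 : 0 ≤ p) (hp1 : p ≤ 1) (n : ℕ) :
    W p (n+2) ≤ (1 - p^2) * W p n := by
  rw [W_succ, WU_succ]
  have h1 := W_mono hp0 hp1 n
  have h2 := W_nonneg hp0 hp1 n
  nlinarith

lemma W_pow (hp0 : 0 ≤ p) (hp1 : p ≤ 1) (n : ℕ) : W p (2*n) ≤ (1 - p^2) ^ n := by
  induction n with
  | zero => simp [W_zero]
  | succ m ih =>
    have := W_two_step hp0 hp1 (2*m)
    have hle : W p (2*(m+1)) = W p (2*m+2) := by ring_nf
    rw [hle]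
    calc W p (2*m+2) ≤ (1 - p^2) * W p (2*m) := W_two_step hp0 hp1 (2*m)
      _ ≤ (1 - p^2) * (1 - p^2)^m := by
          apply mul_le_mul_of_nonneg_left ih
          nlinarith
      _ = (1 - p^2)^(m+1) := by ring


lemma waitingTime_two_ne_one (ω : ℕ → Bool) : waitingTime 2 ω ≠ 1 := by
  intro h
  rw [waitingTime_two] at h
  rcases Set.eq_empty_or_nonempty {n | hits ω n} with he | hne
  · rw [he, Nat.sInf_empty] at h
    omega
  · have hm := Nat.sInf_mem hne
    rw [h] at hm
    have := hm.1
    omega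

lemma noHit_of_waiting_zero {ω : ℕ → Bool} (h : waitingTime 2 ω = 0) (n : ℕ) :
    noHit n ω := by
  intro m _ hm
  rw [waitingTime_two] at h
  have hne : {n | hits ω n}.Nonempty := ⟨m, hm⟩
  have h0 := Nat.sInf_mem hne
  rw [h] at h0
  have := h0.1
  omega

lemma meas_firstAt (hp0 : 0 < p) (hp1 : p < 1) (μ : Measure (ℕ → Bool))
    (hμ : ∀ (n : ℕ) (b : ℕ → Bool),
      μ {ω | ∀ i, 1 ≤ i → i ≤ n → ω i = b i}
        = ENNReal.ofReal (∏ i ∈ Finset.Icc 1 n, if b i = true then p else 1 - p))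
    {v : ℕ} (hv : 2 ≤ v) :
    μ {ω | waitingTime 2 ω = v} = ENNReal.ofReal (g p v) := by
  rw [meas_eq hp0 hp1 μ hμ v (fun ω => waitingTime 2 ω = v) ?hQ]
  · congr 1
    refine Finset.sum_congr rfl fun c _ => ?_
    refine if_congr ?_ rfl rfl
    rw [waitingTime_two_eq_iff hv]
    exact Iff.rfl
  case hQ =>
    intro ω ω' hagree h
    rw [waitingTime_two_eq_iff hv] at h ⊢
    obtain ⟨h1, h2⟩ := h
    refine ⟨(hits_congr hagree le_rfl).1 h1, fun m hm hhit => h2 m hm ?_⟩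
    exact (hits_congr hagree (by omega)).2 hhit

lemma meas_noHit (hp0 : 0 < p) (hp1 : p < 1) (μ : Measure (ℕ → Bool))
    (hμ : ∀ (n : ℕ) (b : ℕ → Bool),
      μ {ω | ∀ i, 1 ≤ i → i ≤ n → ω i = b i}
        = ENNReal.ofReal (∏ i ∈ Finset.Icc 1 n, if b i = true then p else 1 - p))
    (n : ℕ) :
    μ {ω | noHit n ω} = ENNReal.ofReal (W p n) := by
  rw [meas_eq hp0 hp1 μ hμ n (fun ω => noHit n ω) ?hQ]
  · rfl
  case hQ =>
    intro ω ω' hagree h m hm hhit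
    exact h m hm ((hits_congr hagree hm).2 hhit)

end Stmt5Aux
open Stmt5Aux in
theorem stmt5 (p : ℝ) (hp0 : 0 < p) (hp1 : p < 1)
    (μ : Measure (ℕ → Bool)) [IsProbabilityMeasure μ]
    (hμ : ∀ (n : ℕ) (b : ℕ → Bool),
      μ {ω | ∀ i, 1 ≤ i → i ≤ n → ω i = b i}
        = ENNReal.ofReal (∏ i ∈ Finset.Icc 1 n, if b i = true then p else 1 - p)) :
    (1 - PowerSeries.C (R := ℝ) (1 - p) * PowerSeries.X
        - PowerSeries.C (R := ℝ) ((1 - p) * p) * PowerSeries.X ^ 2) *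
      PowerSeries.mk (fun v => (μ {ω | waitingTime 2 ω = v}).toReal)
    = PowerSeries.C (R := ℝ) (p ^ 2) * PowerSeries.X ^ 2 := by
  set f : ℕ → ℝ := fun v => (μ {ω | waitingTime 2 ω = v}).toReal with hf
  have hf2 : ∀ v, 2 ≤ v → f v = g p v := fun v hv => by
    show (μ {ω | waitingTime 2 ω = v}).toReal = _
    rw [meas_firstAt hp0 hp1 μ hμ hv, ENNReal.toReal_ofReal (g_nonneg hp0.le hp1.le v)]
  have hf1 : f 1 = 0 := by
    show (μ {ω | waitingTime 2 ω = 1}).toReal = 0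
    have he : {ω : ℕ → Bool | waitingTime 2 ω = 1} = ∅ := by
      ext ω
      simpa using waitingTime_two_ne_one ω
    rw [he, measure_empty]
    rfl
  have hf0 : f 0 = 0 := by
    have hb : ∀ n : ℕ, f 0 ≤ (1 - p^2)^n := fun n => by
      have hsub : {ω : ℕ → Bool | waitingTime 2 ω = 0} ⊆ {ω | noHit (2*n) ω} :=
        fun ω h => noHit_of_waiting_zero h (2*n)
      have hle : μ {ω | waitingTime 2 ω = 0} ≤ ENNReal.ofReal (W p (2*n)) := by
        rw [← meas_noHit hp0 hp1 μ hμ (2*n)]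
        exact measure_mono hsub
      have h2 := ENNReal.toReal_le_of_le_ofReal (W_nonneg hp0.le hp1.le (2*n)) hle
      exact h2.trans (W_pow hp0.le hp1.le n)
    have hnn : (0:ℝ) ≤ f 0 := ENNReal.toReal_nonneg
    have htend : Filter.Tendsto (fun n : ℕ => (1 - p^2)^n) Filter.atTop (nhds 0) :=
      tendsto_pow_atTop_nhds_zero_of_lt_one (by nlinarith) (by nlinarith)
    have hle0 : f 0 ≤ 0 := ge_of_tendsto' htend hb
    linarith
  have hf2' : ∀ v, 1 ≤ v → f v = g p v := fun v hv => by
    rcases eq_or_lt_of_le hv with rfl | h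
    · rw [hf1, g_one]
    · exact hf2 v (by omega)
  ext n
  rw [sub_mul, sub_mul, one_mul, mul_assoc, mul_assoc, map_sub, map_sub,
    PowerSeries.coeff_C_mul, PowerSeries.coeff_C_mul, PowerSeries.coeff_C_mul,
    PowerSeries.coeff_mk]
  obtain _ | n := n
  · rw [PowerSeries.coeff_zero_X_mul, PowerSeries.coeff_X_pow_mul' (PowerSeries.mk f) 2 0]
    simp [hf0, PowerSeries.coeff_X_pow]
  obtain _ | n := n
  · rw [PowerSeries.coeff_succ_X_mul, PowerSeries.coeff_X_pow_mul' (PowerSeries.mk f) 2 1]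
    simp [hf1, hf0, PowerSeries.coeff_X_pow]
  obtain _ | n := n
  · rw [PowerSeries.coeff_succ_X_mul, PowerSeries.coeff_X_pow_mul' (PowerSeries.mk f) 2 (0+1+1),
      if_pos (by omega : 2 ≤ 0+1+1), PowerSeries.coeff_mk, PowerSeries.coeff_mk,
      show (0+1+1-2 : ℕ) = 0 from rfl, hf0, hf1, show (0+1+1 : ℕ) = 2 from rfl,
      hf2 2 le_rfl, g_two]
    simp [PowerSeries.coeff_X_pow]
  · rw [PowerSeries.coeff_succ_X_mul, PowerSeries.coeff_X_pow_mul' (PowerSeries.mk f) 2 (n+1+1+1),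
      if_pos (by omega : 2 ≤ n+1+1+1), PowerSeries.coeff_mk, PowerSeries.coeff_mk,
      show (n+1+1+1-2 : ℕ) = n+1 from by omega, show (n+1+1+1 : ℕ) = n+3 from rfl,
      show (n+1+1 : ℕ) = n+2 from rfl,
      hf2 (n+3) (by omega), hf2 (n+2) (by omega), hf2' (n+1) (by omega), g_rec,
      PowerSeries.coeff_X_pow, if_neg (by omega : ¬ (n+3 = 2))]
    ring
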